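/- If Condition (★) holds for the specification φ and the fault model δ — i.e., for every output o_i ∈ O there exists a test strategy T ∈ Moore(O,I) (observing only O, not o_i′) such that for all S ∈ Mealy(I, O∪{o_i′}), trace(T,S) ⊨ ((φ[o_i←o_i′] ∧ δ) → ¬φ) — then a universally complete test suite Ω ⊆ Moore(O,I) with respect to δ exists. -/

import Mathlib

namespace TestSynth

/-- LTL formulas over atomic propositions of type `V`. -/
inductive LTL (V : Type) : Type
  | tt : LTL V
  | atom (v : V) : LTL V
  | neg (φ : LTL V) : LTL V
  | disj (φ ψ : LTL V) : LTL V
  | next (φ : LTL V) : LTL V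
  | untl (φ ψ : LTL V) : LTL V

namespace LTL

/-- Satisfaction of an LTL formula on an infinite trace `σ : ℕ → V → Bool`. -/
def Sat {V : Type} : LTL V → (ℕ → V → Bool) → Prop
  | .tt, _ => True
  | .atom v, σ => σ 0 v = true
  | .neg φ, σ => ¬ Sat φ σ
  | .disj φ ψ, σ => Sat φ σ ∨ Sat ψ σ
  | .next φ, σ => Sat φ (fun n => σ (n + 1))
  | .untl φ ψ, σ =>
      ∃ j, Sat ψ (fun n => σ (n + j)) ∧ ∀ k, k < j → Sat φ (fun n => σ (n + k))

def conj {V : Type} (φ ψ : LTL V) : LTL V := .neg (.disj (.neg φ) (.neg ψ))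
def imp {V : Type} (φ ψ : LTL V) : LTL V := .disj (.neg φ) ψ
def liff {V : Type} (φ ψ : LTL V) : LTL V := conj (imp φ ψ) (imp ψ φ)
/-- `F φ` (eventually). -/
def ev {V : Type} (φ : LTL V) : LTL V := .untl .tt φ
/-- `G φ` (always). -/
def alw {V : Type} (φ : LTL V) : LTL V := .neg (ev (.neg φ))

/-- Rename atomic propositions. -/
def rename {V W : Type} (f : V → W) : LTL V → LTL W
  | .tt => .tt
  | .atom v => .atom (f v)
  | .neg φ => .neg (rename f φ)
  | .disj φ ψ => .disj (rename f φ) (rename f ψ)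
  | .next φ => .next (rename f φ)
  | .untl φ ψ => .untl (rename f φ) (rename f ψ)

/-- The atom `v` occurs in the formula. -/
def Mentions {V : Type} (v : V) : LTL V → Prop
  | .tt => False
  | .atom w => w = v
  | .neg φ => Mentions v φ
  | .disj φ ψ => Mentions v φ ∨ Mentions v ψ
  | .next φ => Mentions v φ
  | .untl φ ψ => Mentions v φ ∨ Mentions v ψ

end LTL

/-- A Mealy machine with input letters `A` and output letters `B` (finite state set). -/
structure Mealy (A B : Type) where
  State : Type
  finState : Finite State
  init : State
  trans : State → A → State
  out : State → A → B

/-- A Moore machine with input letters `A` and output letters `B` (finite state set):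
the output does not depend on the current input letter. -/
structure Moore (A B : Type) where
  State : Type
  finState : Finite State
  init : State
  trans : State → A → State
  out : State → B

/-- Joint execution of a test strategy `T` (a Moore machine producing the system's inputs,
observing the system's outputs through `obs`) with a Mealy machine `S`. -/
def exec {A B C : Type} (T : Moore C A) (S : Mealy A B) (obs : B → C) :
    ℕ → T.State × S.State
  | 0 => (T.init, S.init)
  | n + 1 =>
      let p := exec T S obs n
      (T.trans p.1 (obs (S.out p.2 (T.out p.1))), S.trans p.2 (T.out p.1))

/-- The input/output letters produced at step `n` of the joint execution. -/
def io {A B C : Type} (T : Moore C A) (S : Mealy A B) (obs : B → C) (n : ℕ) : A × B :=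
  let p := exec T S obs n
  (T.out p.1, S.out p.2 (T.out p.1))

/-- The signals: inputs `I`, outputs `O`, and one fresh signal `o_i′`. -/
abbrev Sig (I O : Type) : Type := I ⊕ (O ⊕ Unit)

/-- The fresh signal `o_i′`. -/
def fresh (I O : Type) : Sig I O := Sum.inr (Sum.inr ())

/-- Test strategies `Moore(O, I)`. -/
abbrev Strat (I O : Type) : Type 1 := Moore (O → Bool) (I → Bool)
/-- Systems `Mealy(I, O)`. -/
abbrev SysF (I O : Type) : Type 1 := Mealy (I → Bool) (O → Bool)
/-- Systems `Mealy(I, O ∪ {o_i′})`. -/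
abbrev SysE (I O : Type) : Type 1 := Mealy (I → Bool) ((O ⊕ Unit) → Bool)
/-- Strategies `Moore(O ∪ {o_i′}, I)` observing all outputs including `o_i′`. -/
abbrev StratE (I O : Type) : Type 1 := Moore ((O ⊕ Unit) → Bool) (I → Bool)

/-- trace(T, S) for `S ∈ Mealy(I,O)` as a valuation of all signals
(the fresh signal, which does not exist in `S`, is `false`). -/
def trF {I O : Type} (T : Strat I O) (S : SysF I O) : ℕ → Sig I O → Bool :=
  fun n v =>
    match v with
    | Sum.inl i => (io T S id n).1 i
    | Sum.inr (Sum.inl o) => (io T S id n).2 o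
    | Sum.inr (Sum.inr _) => false

/-- Observation of the outputs `O` only (hiding `o_i′`). -/
def obsO {O : Type} (y : (O ⊕ Unit) → Bool) : O → Bool := fun o => y (Sum.inl o)

/-- trace(T, S) for `S ∈ Mealy(I, O ∪ {o_i′})` and `T ∈ Moore(O, I)` observing only `O`. -/
def trP {I O : Type} (T : Strat I O) (S : SysE I O) : ℕ → Sig I O → Bool :=
  fun n v =>
    match v with
    | Sum.inl i => (io T S obsO n).1 i
    | Sum.inr w => (io T S obsO n).2 w

/-- trace(T, S) for `S ∈ Mealy(I, O ∪ {o_i′})` and `T` observing all outputs. -/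
def trE {I O : Type} (T : StratE I O) (S : SysE I O) : ℕ → Sig I O → Bool :=
  fun n v =>
    match v with
    | Sum.inl i => (io T S id n).1 i
    | Sum.inr w => (io T S id n).2 w

/-- `S ⊨r φ` for `S ∈ Mealy(I,O)`. -/
def RealizesF {I O : Type} (S : SysF I O) (φ : LTL (Sig I O)) : Prop :=
  ∀ T : Strat I O, φ.Sat (trF T S)

/-- `S ⊨r φ` for `S ∈ Mealy(I, O ∪ {o_i′})`. -/
def RealizesE {I O : Type} (S : SysE I O) (φ : LTL (Sig I O)) : Prop :=
  ∀ T : StratE I O, φ.Sat (trE T S)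

/-- The output signals `(O ∖ {o_i}) ∪ {o_i′}`. -/
abbrev RestSig (O : Type) (oi : O) : Type := {o : O // o ≠ oi} ⊕ Unit
/-- Systems `Mealy(I, (O ∖ {o_i}) ∪ {o_i′})`. -/
abbrev SysRest (I O : Type) (oi : O) : Type 1 := Mealy (I → Bool) (RestSig O oi → Bool)
/-- Faults `Mealy(I ∪ (O ∖ {o_i}) ∪ {o_i′}, {o_i})`. -/
abbrev FaultM (I O : Type) (oi : O) : Type 1 := Mealy ((I ⊕ RestSig O oi) → Bool) Bool

/-- trace(T, S′) for `S′ ∈ Mealy(I, (O ∖ {o_i}) ∪ {o_i′})`, as a valuation of all signals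
(the absent signal `o_i` is `false`). -/
def trRest {I O : Type} [DecidableEq O] (oi : O)
    (T : Moore (RestSig O oi → Bool) (I → Bool)) (S : SysRest I O oi) :
    ℕ → Sig I O → Bool :=
  fun n v =>
    match v with
    | Sum.inl i => (io T S id n).1 i
    | Sum.inr (Sum.inl o) =>
        if h : o = oi then false else (io T S id n).2 (Sum.inl ⟨o, h⟩)
    | Sum.inr (Sum.inr _) => (io T S id n).2 (Sum.inr ())

/-- `S′ ⊨r φ` for `S′ ∈ Mealy(I, (O ∖ {o_i}) ∪ {o_i′})`. -/
def RealizesRest {I O : Type} [DecidableEq O] (oi : O) (S : SysRest I O oi)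
    (φ : LTL (Sig I O)) : Prop :=
  ∀ T : Moore (RestSig O oi → Bool) (I → Bool), φ.Sat (trRest oi T S)

/-- trace(E, F) for a fault `F ∈ Mealy(I ∪ (O ∖ {o_i}) ∪ {o_i′}, {o_i})` run against an
environment `E`, as a valuation of all signals. -/
def trFault {I O : Type} [DecidableEq O] (oi : O)
    (E : Moore Bool ((I ⊕ RestSig O oi) → Bool)) (F : FaultM I O oi) :
    ℕ → Sig I O → Bool :=
  fun n v =>
    match v with
    | Sum.inl i => (io E F id n).1 (Sum.inl i)
    | Sum.inr (Sum.inl o) =>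
        if h : o = oi then (io E F id n).2
        else (io E F id n).1 (Sum.inr (Sum.inl ⟨o, h⟩))
    | Sum.inr (Sum.inr _) => (io E F id n).1 (Sum.inr (Sum.inr ()))

/-- `F ⊨r δ` for a fault `F ∈ Mealy(I ∪ (O ∖ {o_i}) ∪ {o_i′}, {o_i})`. -/
def RealizesFault {I O : Type} [DecidableEq O] (oi : O) (F : FaultM I O oi)
    (δ : LTL (Sig I O)) : Prop :=
  ∀ E : Moore Bool ((I ⊕ RestSig O oi) → Bool), δ.Sat (trFault oi E F)

/-- The sequential composition `S′ ∘ F ∈ Mealy(I, O ∪ {o_i′})`. -/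
def compSF {I O : Type} [DecidableEq O] (oi : O) (S' : SysRest I O oi)
    (F : FaultM I O oi) : SysE I O where
  State := S'.State × F.State
  finState := by haveI := S'.finState; haveI := F.finState; exact inferInstance
  init := (S'.init, F.init)
  trans := fun p x =>
    (S'.trans p.1 x,
     F.trans p.2 (fun w =>
       match w with
       | Sum.inl i => x i
       | Sum.inr r => S'.out p.1 x r))
  out := fun p x w =>
    match w with
    | Sum.inl o =>
        if h : o = oi then
          F.out p.2 (fun z =>
            match z with
            | Sum.inl i => x i
            | Sum.inr r => S'.out p.1 x r)
        else S'.out p.1 x (Sum.inl ⟨o, h⟩)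
    | Sum.inr _ => S'.out p.1 x (Sum.inr ())

/-- `φ[o_i ← o_i′]`: textual substitution of `o_i′` for all occurrences of `o_i`. -/
def substOut {I O : Type} [DecidableEq O] (oi : O) (φ : LTL (Sig I O)) : LTL (Sig I O) :=
  φ.rename (fun v =>
    match v with
    | Sum.inl i => Sum.inl i
    | Sum.inr (Sum.inl o) => if o = oi then fresh I O else Sum.inr (Sum.inl o)
    | Sum.inr (Sum.inr u) => Sum.inr (Sum.inr u))

/-- A test suite `Ω ⊆ Moore(O, I)` is universally complete w.r.t. specification `φ`
and fault model `δ`. -/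
def UnivComplete {I O : Type} [DecidableEq O] (φ δ : LTL (Sig I O))
    (Ω : Set (Strat I O)) : Prop :=
  ∀ oi : O, ∀ S' : SysRest I O oi, ∀ F : FaultM I O oi,
    ∃ T ∈ Ω,
      RealizesRest oi S' (substOut oi φ) → RealizesFault oi F δ →
        ¬ φ.Sat (trP T (compSF oi S' F))

/-- Condition (★): for every output `o_i` there is a strategy `T ∈ Moore(O,I)` with
`trace(T,S) ⊨ ((φ[o_i←o_i′] ∧ δ) → ¬φ)` for all `S ∈ Mealy(I, O ∪ {o_i′})`. -/
def Star {I O : Type} [DecidableEq O] (φ δ : LTL (Sig I O)) : Prop :=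
  ∀ oi : O, ∃ T : Strat I O, ∀ S : SysE I O,
    LTL.Sat (LTL.imp (LTL.conj (substOut oi φ) δ) (LTL.neg φ)) (trP T S)

/-- The four fault occurrence frequencies `F`, `GF`, `FG`, `G`. -/
def freqs (V : Type) : Set (LTL V → LTL V) :=
  {LTL.ev, fun χ => LTL.alw (LTL.ev χ), fun χ => LTL.ev (LTL.alw χ), LTL.alw}


/-- Satisfaction only depends on the valuation of mentioned atoms. -/
theorem sat_congr {V : Type} (φ : LTL V) :
    ∀ σ τ : ℕ → V → Bool, (∀ n v, φ.Mentions v → σ n v = τ n v) →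
      (φ.Sat σ ↔ φ.Sat τ) := by
  induction φ with
  | tt => intro σ τ h; rfl
  | atom v => intro σ τ h; simp [LTL.Sat, h 0 v rfl]
  | neg φ ih => intro σ τ h; simp only [LTL.Sat]; rw [ih σ τ h]
  | disj φ ψ ih1 ih2 =>
      intro σ τ h
      simp only [LTL.Sat]
      rw [ih1 σ τ (fun n v hv => h n v (Or.inl hv)),
          ih2 σ τ (fun n v hv => h n v (Or.inr hv))]
  | next φ ih =>
      intro σ τ h
      simp only [LTL.Sat]
      exact ih _ _ (fun n v hv => h (n + 1) v hv)
  | untl φ ψ ih1 ih2 =>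
      intro σ τ h
      simp only [LTL.Sat]
      constructor
      · rintro ⟨j, hj, hk⟩
        exact ⟨j, (ih2 _ _ (fun n v hv => h (n + j) v (Or.inr hv))).mp hj,
          fun k hkj => (ih1 _ _ (fun n v hv => h (n + k) v (Or.inl hv))).mp (hk k hkj)⟩
      · rintro ⟨j, hj, hk⟩
        exact ⟨j, (ih2 _ _ (fun n v hv => h (n + j) v (Or.inr hv))).mpr hj,
          fun k hkj => (ih1 _ _ (fun n v hv => h (n + k) v (Or.inl hv))).mpr (hk k hkj)⟩

theorem mentions_rename {V W : Type} (f : V → W) (φ : LTL V) (w : W) :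
    (φ.rename f).Mentions w → ∃ v, φ.Mentions v ∧ f v = w := by
  induction φ with
  | tt => intro h; exact absurd h id
  | atom v => intro h; exact ⟨v, rfl, h⟩
  | neg φ ih => exact fun h => (ih h).imp (fun v => id)
  | disj φ ψ ih1 ih2 =>
      rintro (h | h)
      · obtain ⟨v, hv, hf⟩ := ih1 h; exact ⟨v, Or.inl hv, hf⟩
      · obtain ⟨v, hv, hf⟩ := ih2 h; exact ⟨v, Or.inr hv, hf⟩
  | next φ ih => exact ih
  | untl φ ψ ih1 ih2 =>
      rintro (h | h)
      · obtain ⟨v, hv, hf⟩ := ih1 h; exact ⟨v, Or.inl hv, hf⟩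
      · obtain ⟨v, hv, hf⟩ := ih2 h; exact ⟨v, Or.inr hv, hf⟩

/-- `substOut oi φ` never mentions the output `oi`. -/
theorem substOut_not_mentions {I O : Type} [DecidableEq O] (oi : O)
    (φ : LTL (Sig I O)) : ¬ (substOut oi φ).Mentions (Sum.inr (Sum.inl oi)) := by
  intro h
  obtain ⟨v, _, hf⟩ := mentions_rename _ φ _ h
  rcases v with i | o | u
  · simp at hf
  · dsimp only at hf
    by_cases ho : o = oi
    · rw [if_pos ho] at hf; simp [fresh] at hf
    · rw [if_neg ho] at hf; exact ho (Sum.inl.inj (Sum.inr.inj hf))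
  · simp at hf

section Sim

variable {I O : Type} [DecidableEq O] (oi : O) (T : Strat I O)
  (S' : SysRest I O oi) (F : FaultM I O oi)

/-- The strategy `T` composed with the fault `F`, seen as an environment for `S'`. -/
def mkT' : Moore (RestSig O oi → Bool) (I → Bool) where
  State := T.State × F.State
  finState := by haveI := T.finState; haveI := F.finState; exact inferInstance
  init := (T.init, F.init)
  out := fun p => T.out p.1
  trans := fun p r =>
    let inp : (I ⊕ RestSig O oi) → Bool := fun w =>
      match w with
      | Sum.inl i => T.out p.1 i
      | Sum.inr z => r z
    (T.trans p.1 (fun o => if h : o = oi then F.out p.2 inp else r (Sum.inl ⟨o, h⟩)),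
     F.trans p.2 inp)

/-- The strategy `T` composed with the system `S'`, seen as an environment for `F`. -/
def mkE : Moore Bool ((I ⊕ RestSig O oi) → Bool) where
  State := T.State × S'.State
  finState := by haveI := T.finState; haveI := S'.finState; exact inferInstance
  init := (T.init, S'.init)
  out := fun p => fun w =>
    match w with
    | Sum.inl i => T.out p.1 i
    | Sum.inr z => S'.out p.2 (T.out p.1) z
  trans := fun p b =>
    (T.trans p.1 (fun o =>
       if h : o = oi then b else S'.out p.2 (T.out p.1) (Sum.inl ⟨o, h⟩)),
     S'.trans p.2 (T.out p.1))

theorem execA (n : ℕ) :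
    exec (mkT' oi T F) S' id n =
      (((exec T (compSF oi S' F) obsO n).1, (exec T (compSF oi S' F) obsO n).2.2),
       (exec T (compSF oi S' F) obsO n).2.1) := by
  induction n with
  | zero => rfl
  | succ n ih =>
      simp only [exec]
      rw [ih]
      refine Prod.ext (Prod.ext ?_ rfl) rfl
      simp only [mkT', compSF, obsO, id]
      congr 1

theorem execB (n : ℕ) :
    exec (mkE oi T S') F id n =
      (((exec T (compSF oi S' F) obsO n).1, (exec T (compSF oi S' F) obsO n).2.1),
       (exec T (compSF oi S' F) obsO n).2.2) := by
  induction n with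
  | zero => rfl
  | succ n ih =>
      simp only [exec]
      rw [ih]
      refine Prod.ext (Prod.ext ?_ rfl) ?_
      · simp only [mkE, compSF, obsO, id]
        congr 1
      · simp only [mkE, compSF, obsO, id]

theorem trRest_eq (n : ℕ) (v : Sig I O) (hv : v ≠ Sum.inr (Sum.inl oi)) :
    trRest oi (mkT' oi T F) S' n v = trP T (compSF oi S' F) n v := by
  rcases v with i | o | u
  · simp only [trRest, trP, io]
    rw [execA]
    rfl
  · have ho : o ≠ oi := fun h => hv (by rw [h])
    simp only [trRest, trP, io, dif_neg ho]
    rw [execA]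
    simp only [mkT', compSF, dif_neg ho]
  · simp only [trRest, trP, io]
    rw [execA]
    rfl

theorem trFault_eq (n : ℕ) (v : Sig I O) :
    trFault oi (mkE oi T S') F n v = trP T (compSF oi S' F) n v := by
  rcases v with i | o | u
  · simp only [trFault, trP, io]
    rw [execB]
    rfl
  · by_cases h : o = oi
    · subst h
      simp only [trFault, trP, io, dif_pos rfl]
      rw [execB]
      simp [mkE, compSF]
    · simp only [trFault, trP, io, dif_neg h]
      rw [execB]
      simp only [mkE, compSF, dif_neg h]
  · simp only [trFault, trP, io]
    rw [execB]
    rfl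

end Sim

/-- Theorem 1: if Condition (★) holds for the specification `φ`
(over I ∪ O) and the fault model `δ`, then a universally complete test suite
`Ω ⊆ Moore(O,I)` with respect to `δ` exists. -/
theorem stmt0 (I O : Type) [Finite I] [Finite O] [DecidableEq O]
    (φ δ : LTL (Sig I O)) (hφ : ¬ φ.Mentions (fresh I O))
    (hstar : Star φ δ) :
    ∃ Ω : Set (Strat I O), UnivComplete φ δ Ω := by
  choose T hT using hstar
  refine ⟨Set.range T, fun oi S' F => ⟨T oi, Set.mem_range_self oi, fun hS' hF hsat => ?_⟩⟩
  have hmain := hT oi (compSF oi S' F)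
  simp only [LTL.imp, LTL.conj, LTL.Sat] at hmain
  rcases hmain with h | h
  · apply h
    rintro (h1 | h2)
    · apply h1
      exact (sat_congr (substOut oi φ) _ _ (fun n v hv =>
          trRest_eq oi (T oi) S' F n v
            (fun hveq => substOut_not_mentions oi φ (hveq ▸ hv)))).mp
          (hS' (mkT' oi (T oi) F))
    · apply h2
      have hδ := hF (mkE oi (T oi) S')
      have heq : trFault oi (mkE oi (T oi) S') F = trP (T oi) (compSF oi S' F) := by
        funext n v; exact trFault_eq oi (T oi) S' F n v
      rwa [heq] at hδ
  · exact h hsat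

end TestSynth
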